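/- Let (Ω,F,P) be a probability space, C ⊆ Ω a measurable set, and F_1, F_2 ⊆ F sub-σ-fields. The following are equivalent: (a) there exists a measurable f : Ω×Ω → [0,∞) with P(A ∩ B ∩ C) = ∫_{A×B} f d(P⊗P) for all A ∈ F_1, B ∈ F_2; (b) there exists a measurable g : C×C → [0,∞) with P(A ∩ B ∩ C) = ∫_{(A∩C)×(B∩C)} g d(P⊗P) for all A ∈ F_1, B ∈ F_2. -/

import Mathlib

open MeasureTheory Set
open scoped ENNReal

noncomputable section

namespace Stmt6Aux

variable {Ω : Type*}

lemma prodLE {F1 F2 G1 G2 : MeasurableSpace Ω} (h1 : F1 ≤ G1) (h2 : F2 ≤ G2) :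
    (@Prod.instMeasurableSpace Ω Ω F1 F2) ≤ @Prod.instMeasurableSpace Ω Ω G1 G2 :=
  sup_le_sup (MeasurableSpace.comap_mono h1) (MeasurableSpace.comap_mono h2)

lemma prodExt {α β : Type*} (mα : MeasurableSpace α) (mβ : MeasurableSpace β)
    {κ κ' : Measure (α × β)} (hfin : IsFiniteMeasure κ)
    (h : ∀ A B, MeasurableSet A → MeasurableSet B → κ (A ×ˢ B) = κ' (A ×ˢ B)) : κ = κ' := by
  refine ext_of_generate_finite _ generateFrom_prod.symm isPiSystem_prod ?_ ?_
  · rintro s ⟨A, hA, B, hB, rfl⟩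
    exact h A B hA hB
  · simpa using h univ univ MeasurableSet.univ MeasurableSet.univ

lemma exists_density {α : Type*} (m : MeasurableSpace α) (μ ν : Measure α)
    (hμ : IsFiniteMeasure μ) (hν : IsFiniteMeasure ν) (h : μ ≪ ν) :
    ∃ φ : α → ℝ≥0∞, Measurable φ ∧ ν.withDensity φ = μ := by
  haveI := hμ; haveI := hν
  exact ⟨μ.rnDeriv ν, Measure.measurable_rnDeriv μ ν, Measure.withDensity_rnDeriv_eq μ ν h⟩

variable (F1 F2 : MeasurableSpace Ω) [inst : MeasurableSpace Ω] (P : Measure Ω) (C : Set Ω)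

/-- The diagonal measure `A × B ↦ P (A ∩ B ∩ C)`, as a measure on `F1.prod F2`. -/
def nuM (h1 : F1 ≤ inst) (h2 : F2 ≤ inst) :
    @Measure (Ω × Ω) (@Prod.instMeasurableSpace Ω Ω F1 F2) :=
  ((P.restrict C).map (fun ω => (ω, ω))).trim (prodLE h1 h2)

lemma nuM_finite (h1 : F1 ≤ inst) (h2 : F2 ≤ inst) [IsFiniteMeasure P] :
    IsFiniteMeasure (nuM F1 F2 P C h1 h2) := by
  haveI := Measure.isFiniteMeasure_map (P.restrict C) (fun ω : Ω => (ω, ω))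
  exact isFiniteMeasure_trim _

lemma nuM_apply (h1 : F1 ≤ inst) (h2 : F2 ≤ inst) (hC : MeasurableSet C) {A B : Set Ω}
    (hA : MeasurableSet[F1] A) (hB : MeasurableSet[F2] B) :
    nuM F1 F2 P C h1 h2 (A ×ˢ B) = P (A ∩ B ∩ C) := by
  have hAB : MeasurableSet[@Prod.instMeasurableSpace Ω Ω F1 F2] (A ×ˢ B) :=
    @MeasurableSet.prod Ω Ω F1 F2 A B hA hB
  have hdiag : Measurable (fun ω : Ω => (ω, ω)) := measurable_id.prodMk measurable_id
  rw [nuM, trim_measurableSet_eq _ hAB,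
    Measure.map_apply hdiag ((h1 A hA).prod (h2 B hB))]
  have hpre : (fun ω : Ω => (ω, ω)) ⁻¹' (A ×ˢ B) = A ∩ B := by
    ext ω; simp [Set.mem_prod]
  rw [hpre, Measure.restrict_apply ((h1 A hA).inter (h2 B hB))]

lemma repr_ac (h1 : F1 ≤ inst) (h2 : F2 ≤ inst) (hC : MeasurableSet C)
    [IsFiniteMeasure P] (ρ : Measure (Ω × Ω)) (f : Ω × Ω → ℝ≥0∞)
    (hrect : ∀ A B : Set Ω, MeasurableSet[F1] A → MeasurableSet[F2] B →
      P (A ∩ B ∩ C) = ∫⁻ p in A ×ˢ B, f p ∂ρ) :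
    nuM F1 F2 P C h1 h2 ≪ ρ.trim (prodLE h1 h2) := by
  have hfin := nuM_finite F1 F2 P C h1 h2
  have hκ : nuM F1 F2 P C h1 h2 = (ρ.withDensity f).trim (prodLE h1 h2) := by
    refine prodExt F1 F2 hfin fun A B hA hB => ?_
    have hABm : MeasurableSet[@Prod.instMeasurableSpace Ω Ω F1 F2] (A ×ˢ B) :=
      @MeasurableSet.prod Ω Ω F1 F2 A B hA hB
    rw [nuM_apply F1 F2 P C h1 h2 hC hA hB, trim_measurableSet_eq _ hABm,
      withDensity_apply _ ((h1 A hA).prod (h2 B hB))]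
    exact hrect A B hA hB
  refine Measure.AbsolutelyContinuous.mk fun s hs h0 => ?_
  rw [trim_measurableSet_eq _ hs] at h0
  rw [hκ, trim_measurableSet_eq _ hs, withDensity_apply _ (prodLE h1 h2 s hs)]
  exact setLIntegral_measure_zero _ _ h0

lemma ac_repr (h1 : F1 ≤ inst) (h2 : F2 ≤ inst) (hC : MeasurableSet C)
    [IsFiniteMeasure P] (ρ : Measure (Ω × Ω)) [IsFiniteMeasure ρ]
    (hac : nuM F1 F2 P C h1 h2 ≪ ρ.trim (prodLE h1 h2)) :
    ∃ f : Ω × Ω → ℝ≥0∞, Measurable f ∧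
      ∀ A B : Set Ω, MeasurableSet[F1] A → MeasurableSet[F2] B →
        P (A ∩ B ∩ C) = ∫⁻ p in A ×ˢ B, f p ∂ρ := by
  have hfin := nuM_finite F1 F2 P C h1 h2
  obtain ⟨φ, hφm, hφ⟩ :=
    exists_density _ (nuM F1 F2 P C h1 h2) (ρ.trim (prodLE h1 h2)) hfin
      (isFiniteMeasure_trim _) hac
  refine ⟨φ, hφm.mono (prodLE h1 h2) le_rfl, fun A B hA hB => ?_⟩
  have hABm : MeasurableSet[@Prod.instMeasurableSpace Ω Ω F1 F2] (A ×ˢ B) :=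
    @MeasurableSet.prod Ω Ω F1 F2 A B hA hB
  calc P (A ∩ B ∩ C) = nuM F1 F2 P C h1 h2 (A ×ˢ B) :=
        (nuM_apply F1 F2 P C h1 h2 hC hA hB).symm
    _ = (ρ.trim (prodLE h1 h2)).withDensity φ (A ×ˢ B) := by rw [hφ]
    _ = ∫⁻ p in A ×ˢ B, φ p ∂(ρ.trim (prodLE h1 h2)) := withDensity_apply _ hABm
    _ = ∫⁻ p in A ×ˢ B, φ p ∂ρ := by
        rw [restrict_trim _ ρ hABm, lintegral_trim _ hφm]

lemma integral_conv [IsFiniteMeasure P] (hC : MeasurableSet C) {A B : Set Ω}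
    (hA : MeasurableSet A) (hB : MeasurableSet B) (g : Ω × Ω → ℝ≥0∞) :
    ∫⁻ p in A ×ˢ B, g p ∂((P.restrict C).prod (P.restrict C)) =
      ∫⁻ p in (A ∩ C) ×ˢ (B ∩ C), g p ∂(P.prod P) := by
  rw [Measure.prod_restrict, Measure.restrict_restrict (hA.prod hB), Set.prod_inter_prod]

lemma ac_trans (h1 : F1 ≤ inst) (h2 : F2 ≤ inst) (hC : MeasurableSet C)
    [IsFiniteMeasure P]
    (hac : nuM F1 F2 P C h1 h2 ≪ (P.prod P).trim (prodLE h1 h2)) :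
    nuM F1 F2 P C h1 h2 ≪ ((P.restrict C).prod (P.restrict C)).trim (prodLE h1 h2) := by
  -- densities of `P.restrict C` relative to `P` on `F1` and `F2`
  have hac1 : (P.restrict C).trim h1 ≪ P.trim h1 := by
    refine Measure.AbsolutelyContinuous.mk fun s hs h0 => ?_
    rw [trim_measurableSet_eq h1 hs] at h0 ⊢
    rw [Measure.restrict_apply (h1 s hs)]
    exact measure_mono_null inter_subset_left h0
  have hac2 : (P.restrict C).trim h2 ≪ P.trim h2 := by
    refine Measure.AbsolutelyContinuous.mk fun s hs h0 => ?_
    rw [trim_measurableSet_eq h2 hs] at h0 ⊢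
    rw [Measure.restrict_apply (h2 s hs)]
    exact measure_mono_null inter_subset_left h0
  obtain ⟨φ1, hφ1m, hφ1⟩ := exists_density F1 ((P.restrict C).trim h1) (P.trim h1)
    (isFiniteMeasure_trim _) (isFiniteMeasure_trim _) hac1
  obtain ⟨φ2, hφ2m, hφ2⟩ := exists_density F2 ((P.restrict C).trim h2) (P.trim h2)
    (isFiniteMeasure_trim _) (isFiniteMeasure_trim _) hac2
  have hint1 : ∀ A : Set Ω, MeasurableSet[F1] A → ∫⁻ x in A, φ1 x ∂P = P (A ∩ C) := by
    intro A hA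
    have h' : ∫⁻ x in A, φ1 x ∂(P.trim h1) = ∫⁻ x in A, φ1 x ∂P := by
      rw [restrict_trim h1 P hA, lintegral_trim _ hφ1m]
    rw [← h', ← withDensity_apply _ hA, hφ1, trim_measurableSet_eq h1 hA,
      Measure.restrict_apply (h1 A hA)]
  have hint2 : ∀ B : Set Ω, MeasurableSet[F2] B → ∫⁻ x in B, φ2 x ∂P = P (B ∩ C) := by
    intro B hB
    have h' : ∫⁻ x in B, φ2 x ∂(P.trim h2) = ∫⁻ x in B, φ2 x ∂P := by
      rw [restrict_trim h2 P hB, lintegral_trim _ hφ2m]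
    rw [← h', ← withDensity_apply _ hB, hφ2, trim_measurableSet_eq h2 hB,
      Measure.restrict_apply (h2 B hB)]
  have hz1m : MeasurableSet[F1] {x | φ1 x = 0} := hφ1m (measurableSet_singleton 0)
  have hz2m : MeasurableSet[F2] {x | φ2 x = 0} := hφ2m (measurableSet_singleton 0)
  have hzero1 : P ({x | φ1 x = 0} ∩ C) = 0 := by
    rw [← hint1 _ hz1m,
      setLIntegral_congr_fun (h1 _ hz1m) (fun x hx => hx)]
    simp
  have hzero2 : P ({x | φ2 x = 0} ∩ C) = 0 := by
    rw [← hint2 _ hz2m,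
      setLIntegral_congr_fun (h2 _ hz2m) (fun x hx => hx)]
    simp
  -- the density of `(P.restrict C).prod (P.restrict C)` w.r.t. `P.prod P` on `F1.prod F2`
  set ψ : Ω × Ω → ℝ≥0∞ := fun p => φ1 p.1 * φ2 p.2 with hψdef
  have hψm : Measurable[@Prod.instMeasurableSpace Ω Ω F1 F2] ψ :=
    ((hφ1m.comp (@measurable_fst Ω Ω F1 F2)).mul
      (hφ2m.comp (@measurable_snd Ω Ω F1 F2)))
  have hψm' : Measurable ψ := hψm.mono (prodLE h1 h2) le_rfl
  have hfin := nuM_finite F1 F2 P C h1 h2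
  have hThpsi : ((P.restrict C).prod (P.restrict C)).trim (prodLE h1 h2) =
      ((P.prod P).withDensity ψ).trim (prodLE h1 h2) := by
    refine prodExt F1 F2 (isFiniteMeasure_trim _) fun A B hA hB => ?_
    have hABm : MeasurableSet[@Prod.instMeasurableSpace Ω Ω F1 F2] (A ×ˢ B) :=
      @MeasurableSet.prod Ω Ω F1 F2 A B hA hB
    rw [trim_measurableSet_eq _ hABm, trim_measurableSet_eq _ hABm,
      Measure.prod_prod, Measure.restrict_apply (h1 A hA), Measure.restrict_apply (h2 B hB),
      withDensity_apply _ ((h1 A hA).prod (h2 B hB)), ← Measure.prod_restrict]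
    simp only [hψdef]
    rw [lintegral_prod_mul ((hφ1m.mono h1 le_rfl).aemeasurable)
      ((hφ2m.mono h2 le_rfl).aemeasurable), hint1 A hA, hint2 B hB]
  refine Measure.AbsolutelyContinuous.mk fun s hs h0 => ?_
  rw [hThpsi, trim_measurableSet_eq _ hs] at h0
  -- the part of `s` where `ψ ≠ 0` is `P.prod P`-null
  have hTm : MeasurableSet[@Prod.instMeasurableSpace Ω Ω F1 F2] ({p | ψ p ≠ 0} ∩ s) :=
    ((hψm (measurableSet_singleton 0)).compl).inter hs
  have hT0 : (P.prod P) ({p | ψ p ≠ 0} ∩ s) = 0 :=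
    (withDensity_apply_eq_zero hψm').mp h0
  have hnT : nuM F1 F2 P C h1 h2 ({p | ψ p ≠ 0} ∩ s) = 0 := by
    refine hac ?_
    rw [trim_measurableSet_eq _ hTm]
    exact hT0
  have hn1 : nuM F1 F2 P C h1 h2 ({x | φ1 x = 0} ×ˢ (univ : Set Ω)) = 0 := by
    rw [nuM_apply F1 F2 P C h1 h2 hC hz1m MeasurableSet.univ, inter_univ]
    exact hzero1
  have hn2 : nuM F1 F2 P C h1 h2 ((univ : Set Ω) ×ˢ {x | φ2 x = 0}) = 0 := by
    rw [nuM_apply F1 F2 P C h1 h2 hC MeasurableSet.univ hz2m, univ_inter]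
    exact hzero2
  have hsub : s ⊆ ({p | ψ p ≠ 0} ∩ s) ∪
      (({x | φ1 x = 0} ×ˢ (univ : Set Ω)) ∪ ((univ : Set Ω) ×ˢ {x | φ2 x = 0})) := by
    intro p hp
    by_cases hψp : ψ p = 0
    · rcases mul_eq_zero.mp hψp with h | h
      · exact Or.inr (Or.inl ⟨h, trivial⟩)
      · exact Or.inr (Or.inr ⟨trivial, h⟩)
    · exact Or.inl ⟨hψp, hp⟩
  exact measure_mono_null hsub (measure_union_null hnT (measure_union_null hn1 hn2))

end Stmt6Aux

open Stmt6Aux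

theorem stmt6 {Ω : Type*} [inst : MeasurableSpace Ω] (P : Measure Ω)
    [IsProbabilityMeasure P] (C : Set Ω) (hC : MeasurableSet C)
    (F1 F2 : MeasurableSpace Ω) (h1 : F1 ≤ inst) (h2 : F2 ≤ inst) :
    (∃ f : Ω × Ω → ℝ≥0∞,
      @Measurable _ _ (@Prod.instMeasurableSpace Ω Ω inst inst) _ f ∧
      ∀ A B : Set Ω, MeasurableSet[F1] A → MeasurableSet[F2] B →
        P (A ∩ B ∩ C) =
          ∫⁻ p in A ×ˢ B, f p ∂(@Measure.prod Ω Ω inst inst P P)) ↔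
    (∃ g : Ω × Ω → ℝ≥0∞,
      @Measurable _ _ (@Prod.instMeasurableSpace Ω Ω inst inst) _ g ∧
      ∀ A B : Set Ω, MeasurableSet[F1] A → MeasurableSet[F2] B →
        P (A ∩ B ∩ C) =
          ∫⁻ p in (A ∩ C) ×ˢ (B ∩ C), g p ∂(@Measure.prod Ω Ω inst inst P P)) := by
  letI instP : MeasurableSpace Ω := inst
  constructor
  · rintro ⟨f, hfm, hf⟩
    have hacPi : nuM F1 F2 P C h1 h2 ≪ (P.prod P).trim (prodLE h1 h2) :=
      repr_ac F1 F2 P C h1 h2 hC (P.prod P) f hf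
    have hacTh := ac_trans F1 F2 P C h1 h2 hC hacPi
    obtain ⟨g, hgm, hg⟩ :=
      ac_repr F1 F2 P C h1 h2 hC ((P.restrict C).prod (P.restrict C)) hacTh
    refine ⟨g, hgm, fun A B hA hB => ?_⟩
    rw [hg A B hA hB, integral_conv P C hC (h1 A hA) (h2 B hB) g]
  · rintro ⟨g, hgm, hg⟩
    have hrect : ∀ A B : Set Ω, MeasurableSet[F1] A → MeasurableSet[F2] B →
        P (A ∩ B ∩ C) = ∫⁻ p in A ×ˢ B, g p ∂((P.restrict C).prod (P.restrict C)) := by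
      intro A B hA hB
      rw [integral_conv P C hC (h1 A hA) (h2 B hB) g]
      exact hg A B hA hB
    have hacTh : nuM F1 F2 P C h1 h2 ≪
        ((P.restrict C).prod (P.restrict C)).trim (prodLE h1 h2) :=
      repr_ac F1 F2 P C h1 h2 hC ((P.restrict C).prod (P.restrict C)) g hrect
    have hacPi : nuM F1 F2 P C h1 h2 ≪ (P.prod P).trim (prodLE h1 h2) := by
      refine Measure.AbsolutelyContinuous.mk fun s hs h0 => ?_
      rw [trim_measurableSet_eq _ hs] at h0
      refine hacTh ?_
      rw [trim_measurableSet_eq _ hs, Measure.prod_restrict]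
      exact le_antisymm (le_trans (Measure.le_iff'.mp Measure.restrict_le_self s) h0.le)
        zero_le
    obtain ⟨f, hfm, hf⟩ := ac_repr F1 F2 P C h1 h2 hC (P.prod P) hacPi
    exact ⟨f, hfm, hf⟩
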